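/- arXiv:2508.16561 — 5 statements merged into one kernel-verified Lean document; each statement's English description precedes it below -/
import Mathlib

section
/- Let Θ be a regular simplex in R^n with radius δ, let x_r = −x_{n+1} + (2/n)·Σ_{i=1}^n x_i, and define G = −x_r x_rᵀ + (2/n)·Σ_{i=1}^n x_i x_iᵀ − x_{n+1} x_{n+1}ᵀ. Then G = (2(n+1)/n²)·δ²·I_n − (2(n+1)(n+2)/n²)·δ²·u uᵀ, where u = (x_{n+1} − c)/δ and c is the centroid. -/
/-- The matrix `G` associated with the reflection query of a regular simplex has
the spectral form `(2(n+1)/n²)·δ²·I − (2(n+1)(n+2)/n²)·δ²·u uᵀ`, where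
`u = (x_{n+1} − c)/δ`. -/
theorem reflection_G_formula (n : ℕ) (hn : 1 ≤ n)
    (x : Fin (n + 1) → EuclideanSpace ℝ (Fin n))
    (c : EuclideanSpace ℝ (Fin n)) (δ : ℝ) (hδ : 0 < δ)
    (hc : c = (1 / (n + 1 : ℝ)) • ∑ i, x i)
    (hrad : ∀ i, ‖x i - c‖ = δ)
    (hinner : ∀ i j : Fin (n + 1), i ≠ j →
      (inner ℝ (x i - c) (x j - c) : ℝ) = -δ ^ 2 / n)
    (xr : EuclideanSpace ℝ (Fin n))
    (hxr : xr = -x (Fin.last n) + (2 / (n : ℝ)) • ∑ i : Fin n, x i.castSucc)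
    (u : EuclideanSpace ℝ (Fin n))
    (hu : u = δ⁻¹ • (x (Fin.last n) - c))
    (G : Matrix (Fin n) (Fin n) ℝ)
    (hG : G = Matrix.of (fun a b : Fin n =>
      -(xr a * xr b)
      + (2 / (n : ℝ)) * ∑ i : Fin n, x i.castSucc a * x i.castSucc b
      - x (Fin.last n) a * x (Fin.last n) b)) :
    G = ((2 * (n + 1 : ℝ) / n ^ 2) * δ ^ 2) • (1 : Matrix (Fin n) (Fin n) ℝ)
      - ((2 * (n + 1 : ℝ) * (n + 2) / n ^ 2) * δ ^ 2)
          • Matrix.of (fun a b : Fin n => u a * u b) := by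
  have hn0 : (n : ℝ) ≠ 0 := by positivity
  have hδ0 : δ ≠ 0 := ne_of_gt hδ
  -- centered vectors
  set v : Fin (n + 1) → Fin n → ℝ := fun i a => x i a - c a with hv
  -- inner products of centered vectors, componentwise
  have hip : ∀ i j : Fin (n + 1), ∑ k, v i k * v j k
      = if i = j then δ ^ 2 else -δ ^ 2 / n := by
    intro i j
    have key : (inner ℝ (x i - c) (x j - c) : ℝ) = ∑ k, v i k * v j k := by
      simp [hv, PiLp.inner_apply, RCLike.inner_apply]
      exact Finset.sum_congr rfl fun _ _ => mul_comm _ _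
    rw [← key]
    by_cases h : i = j
    · subst h
      rw [if_pos rfl, real_inner_self_eq_norm_sq, hrad]
    · rw [if_neg h, hinner i j h]
  -- centered vectors sum to zero
  have hsum0 : ∀ a : Fin n, ∑ i, v i a = 0 := by
    intro a
    have hca : c a = (1 / (n + 1 : ℝ)) * ∑ i, x i a := by
      rw [hc]
      have h1 : ((1 / (n + 1 : ℝ)) • ∑ i, x i) a
          = (1 / (n + 1 : ℝ)) * (∑ i, x i) a := rfl
      rw [h1, WithLp.ofLp_sum, Finset.sum_apply a Finset.univ]
    have hn1 : (n + 1 : ℝ) ≠ 0 := by positivity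
    simp only [hv, Finset.sum_sub_distrib, Finset.sum_const, Finset.card_univ,
      Fintype.card_fin, nsmul_eq_mul, hca]
    push_cast
    field_simp
    ring
  -- the second-moment matrix
  set M : Fin n → Fin n → ℝ := fun a b => ∑ i, v i a * v i b with hMdef
  set lam : ℝ := (n + 1) / n * δ ^ 2 with hlam
  -- M is symmetric
  have hMsym : ∀ a b, M a b = M b a := by
    intro a b
    simp only [hMdef]
    exact Finset.sum_congr rfl fun i _ => mul_comm _ _
  -- M² = lam • M
  have hMsq : ∀ a b, ∑ k, M a k * M k b = lam * M a b := by
    intro a b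
    have step1 : ∀ k, M a k * M k b = ∑ i, ∑ j, (v i a * v j b) * (v i k * v j k) := by
      intro k
      rw [hMdef]
      rw [Finset.sum_mul_sum]
      exact Finset.sum_congr rfl fun i _ => Finset.sum_congr rfl fun j _ => by ring
    calc ∑ k, M a k * M k b
        = ∑ k, ∑ i, ∑ j, (v i a * v j b) * (v i k * v j k) := by
          exact Finset.sum_congr rfl fun k _ => step1 k
      _ = ∑ i, ∑ j, (v i a * v j b) * ∑ k, v i k * v j k := by
          rw [Finset.sum_comm]
          refine Finset.sum_congr rfl fun i _ => ?_
          rw [Finset.sum_comm]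
          refine Finset.sum_congr rfl fun j _ => ?_
          rw [Finset.mul_sum]
      _ = ∑ i, ∑ j, (v i a * v j b) * (if i = j then δ ^ 2 else -δ ^ 2 / n) := by
          exact Finset.sum_congr rfl fun i _ => Finset.sum_congr rfl fun j _ => by
            rw [hip]
      _ = ∑ i, ∑ j, ((if j = i then (v i a * v j b) * (δ ^ 2 + δ ^ 2 / n) else 0)
            + (v i a * v j b) * (-δ ^ 2 / n)) := by
          refine Finset.sum_congr rfl fun i _ => Finset.sum_congr rfl fun j _ => ?_
          by_cases h : i = j
          · subst h; simp; ring
          · rw [if_neg (Ne.symm h), if_neg h]; ring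
      _ = lam * M a b := by
          simp only [Finset.sum_add_distrib, Finset.sum_ite_eq, Finset.sum_ite_eq', Finset.mem_univ,
            if_true]
          have h1 : ∀ i : Fin (n+1), ∑ j, (v i a * v j b) * (-δ ^ 2 / n)
              = v i a * (∑ j, v j b) * (-δ ^ 2 / n) := by
            intro i
            rw [← Finset.sum_mul, ← Finset.mul_sum]
          rw [Finset.sum_congr rfl fun i _ => h1 i]
          simp only [hsum0, mul_zero, zero_mul, Finset.sum_const, smul_zero,
            add_zero]
          rw [hlam, hMdef, Finset.mul_sum]
          refine Finset.sum_congr rfl fun i _ => ?_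
          field_simp
  -- trace M = (n+1) δ²
  have htr : ∑ a, M a a = (n + 1) * δ ^ 2 := by
    rw [Finset.sum_comm]
    have : ∀ i : Fin (n+1), ∑ a, v i a * v i a = δ ^ 2 := by
      intro i
      have := hip i i
      rwa [if_pos rfl] at this
    rw [Finset.sum_congr rfl fun i _ => this i]
    simp [Finset.sum_const, Finset.card_univ]
  -- P := lam • I − M has ∑ P² = 0, hence M = lam • I
  have hM : ∀ a b, M a b = if a = b then lam else 0 := by
    have hsq0 : ∑ a, ∑ b, ((if a = b then lam else 0) - M a b) ^ 2 = 0 := by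
      have expand : ∀ a b : Fin n, ((if a = b then lam else 0) - M a b) ^ 2
          = (if a = b then lam ^ 2 else 0) - (if a = b then 2 * lam * M a b else 0)
            + M a b * M b a := by
        intro a b
        rw [hMsym b a]
        by_cases h : a = b <;> simp [h] <;> ring
      simp only [Finset.sum_congr rfl fun a _ => Finset.sum_congr rfl (fun b _ => expand a b)]
      simp only [Finset.sum_add_distrib, Finset.sum_sub_distrib, Finset.sum_ite_eq,
        Finset.mem_univ, if_true]
      rw [Finset.sum_congr rfl fun a (_ : a ∈ Finset.univ) => hMsq a a, ← Finset.mul_sum,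
        htr, Finset.sum_const, Finset.card_univ, Fintype.card_fin, ← Finset.mul_sum,
        htr, nsmul_eq_mul, hlam]
      field_simp
      ring
    intro a b
    have hnn : ∀ p ∈ (Finset.univ : Finset (Fin n)),
        (0:ℝ) ≤ ∑ q, ((if p = q then lam else 0) - M p q) ^ 2 :=
      fun p _ => Finset.sum_nonneg fun q _ => sq_nonneg _
    have h1 := (Finset.sum_eq_zero_iff_of_nonneg hnn).mp hsq0 a (Finset.mem_univ a)
    have h2 := (Finset.sum_eq_zero_iff_of_nonneg
      (fun q (_ : q ∈ Finset.univ) => sq_nonneg ((if a = q then lam else 0) - M a q))).mp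
      h1 b (Finset.mem_univ b)
    have := pow_eq_zero_iff (n := 2) (by norm_num) |>.mp h2
    linarith [this]
  -- componentwise notation
  set w : Fin n → ℝ := fun a => x (Fin.last n) a - c a with hw
  -- sum over first n centered vectors
  have hS : ∀ a, ∑ i : Fin n, v i.castSucc a = -(w a) := by
    intro a
    have h := hsum0 a
    rw [Fin.sum_univ_castSucc] at h
    have hwv : v (Fin.last n) a = w a := rfl
    rw [hwv] at h
    linarith
  -- sum of coordinates
  have hxs : ∀ a, ∑ i : Fin n, x i.castSucc a = n * c a - w a := by
    intro a
    have h1 : ∑ i : Fin n, x i.castSucc a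
        = ∑ i : Fin n, (v i.castSucc a + c a) := by
      exact Finset.sum_congr rfl fun i _ => by simp [hv]
    rw [h1, Finset.sum_add_distrib, hS, Finset.sum_const, Finset.card_univ,
      Fintype.card_fin, nsmul_eq_mul]
    ring
  -- sum of products of coordinates
  have hQ : ∀ a b, ∑ i : Fin n, x i.castSucc a * x i.castSucc b
      = M a b - w a * w b - c a * w b - c b * w a + n * (c a * c b) := by
    intro a b
    have h1 : ∑ i : Fin n, x i.castSucc a * x i.castSucc b
        = ∑ i : Fin n, (v i.castSucc a * v i.castSucc b
            + c b * v i.castSucc a + c a * v i.castSucc b + c a * c b) := by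
      exact Finset.sum_congr rfl fun i _ => by simp only [hv]; ring
    have h2 : ∑ i : Fin n, v i.castSucc a * v i.castSucc b
        = M a b - w a * w b := by
      have h := Fin.sum_univ_castSucc (fun i => v i a * v i b)
      have hwv : v (Fin.last n) a * v (Fin.last n) b = w a * w b := rfl
      simp only [hMdef, h, hwv]
      ring
    rw [h1, Finset.sum_add_distrib, Finset.sum_add_distrib, Finset.sum_add_distrib,
      h2, ← Finset.mul_sum, ← Finset.mul_sum, hS, hS, Finset.sum_const,
      Finset.card_univ, Fintype.card_fin, nsmul_eq_mul]
    ring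
  -- xr componentwise
  have hxra : ∀ a, xr a = c a - ((n + 2) / n) * w a := by
    intro a
    rw [hxr]
    have h1 : (-x (Fin.last n) + (2 / (n : ℝ)) • ∑ i : Fin n, x i.castSucc) a
        = -(x (Fin.last n) a) + (2 / (n : ℝ)) * (∑ i : Fin n, x i.castSucc) a := rfl
    rw [h1, WithLp.ofLp_sum, Finset.sum_apply a Finset.univ, hxs]
    have hxl : x (Fin.last n) a = c a + w a := by simp [hw]
    rw [hxl]
    field_simp
    ring
  -- u componentwise
  have hua : ∀ a, u a = δ⁻¹ * w a := by
    intro a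
    rw [hu]
    rfl
  -- final entrywise verification
  rw [hG]
  ext a b
  simp only [Matrix.sub_apply, Matrix.smul_apply, Matrix.of_apply, Matrix.one_apply,
    smul_eq_mul, mul_ite, mul_one, mul_zero]
  rw [hQ, hxra, hxra, hM, hua, hua]
  have hxl : ∀ a, x (Fin.last n) a = c a + w a := fun a => by simp [hw]
  rw [hxl, hxl, hlam]
  by_cases h : a = b
  · subst h
    simp only [if_pos rfl, if_true]
    field_simp
    ring
  · simp only [if_neg h]
    field_simp
    ring
end

section
/- Let f : R^n → R be L-smooth and let Θ = {x_1,...,x_{n+1}} be a regular simplex of radius δ with reflection point x_r = −x_{n+1} + (2/n)·Σ_{i=1}^n x_i. Then |f(x_r) + f(x_{n+1}) − (2/n)·Σ_{i=1}^n f(x_i)| ≤ ((2n+2)/n)·L·δ². -/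
open scoped RealInnerProductSpace
open Set

lemma taylor_descent {E : Type*} [NormedAddCommGroup E] [InnerProductSpace ℝ E]
    [CompleteSpace E] {L : ℝ} {f : E → ℝ}
    (hdiff : Differentiable ℝ f)
    (hlip : ∀ y z : E, ‖gradient f y - gradient f z‖ ≤ L * ‖y - z‖) (y z : E) :
    abs (f y - f z - ⟪gradient f z, y - z⟫) ≤ L / 2 * ‖y - z‖ ^ 2 := by
  set g := gradient f z with hg
  set φ : ℝ → ℝ := fun t => f (z + t • (y - z)) - t * ⟪g, y - z⟫ - f z with hφ
  have hderiv : ∀ t : ℝ,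
      HasDerivAt φ (⟪gradient f (z + t • (y - z)) - g, y - z⟫) t := by
    intro t
    have h1 : HasDerivAt (fun t : ℝ => z + t • (y - z)) (y - z) t := by
      simpa using ((hasDerivAt_id t).smul_const (y - z)).const_add z
    have h2 := ((hdiff (z + t • (y - z))).hasGradientAt.hasFDerivAt.comp_hasDerivAt t h1)
    have h3 : HasDerivAt (fun t : ℝ => t * ⟪g, y - z⟫) (⟪g, y - z⟫) t :=
      hasDerivAt_mul_const _
    have h4 := (h2.sub h3).sub_const (f z)
    simpa [hφ, inner_sub_left] using h4
  have key := image_norm_le_of_norm_deriv_right_le_deriv_boundary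
    (f := φ) (a := 0) (b := 1)
    (f' := fun t => ⟪gradient f (z + t • (y - z)) - g, y - z⟫)
    (B := fun t => L / 2 * ‖y - z‖ ^ 2 * t ^ 2) (B' := fun t => L * ‖y - z‖ ^ 2 * t)
    (fun t _ => (hderiv t).continuousAt.continuousWithinAt)
    (fun t _ => (hderiv t).hasDerivWithinAt)
    (by simp [hφ]) (fun t => by
      have := ((hasDerivAt_pow 2 t).const_mul (L / 2 * ‖y - z‖ ^ 2))
      exact this.congr_deriv (by ring))
    (fun t ht => by
      have h1 : |⟪gradient f (z + t • (y - z)) - g, y - z⟫|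
          ≤ ‖gradient f (z + t • (y - z)) - g‖ * ‖y - z‖ := abs_real_inner_le_norm _ _
      have h2 : ‖gradient f (z + t • (y - z)) - g‖ ≤ L * ‖t • (y - z)‖ := by
        simpa using hlip (z + t • (y - z)) z
      have ht0 : 0 ≤ t := ht.1
      have : ‖t • (y - z)‖ = t * ‖y - z‖ := by
        rw [norm_smul, Real.norm_eq_abs, abs_of_nonneg ht0]
      rw [Real.norm_eq_abs]
      calc |⟪gradient f (z + t • (y - z)) - g, y - z⟫|
          ≤ (L * (t * ‖y - z‖)) * ‖y - z‖ := le_trans h1 (by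
            apply mul_le_mul_of_nonneg_right _ (norm_nonneg _)
            rw [← this]; exact h2)
        _ = L * ‖y - z‖ ^ 2 * t := by ring)
  have := key (x := 1) ⟨zero_le_one, le_refl 1⟩
  simp only [hφ, one_smul, one_mul, one_pow, mul_one, Real.norm_eq_abs] at this
  calc abs (f y - f z - ⟪g, y - z⟫) = abs (f (z + (y - z)) - ⟪g, y - z⟫ - f z) := by
        rw [add_sub_cancel]; ring_nf
    _ ≤ L / 2 * ‖y - z‖ ^ 2 := this

/-- Reflection extrapolation error bound (nonconvex case): for an `L`-smooth `f`
and a regular simplex of radius `δ`,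
`|f(x_r) + f(x_{n+1}) − (2/n)·∑_{i≤n} f(x_i)| ≤ ((2n+2)/n)·L·δ²`. -/
theorem reflection_error_bound (n : ℕ) (hn : 1 ≤ n) (L : ℝ) (hL : 0 < L)
    (f : EuclideanSpace ℝ (Fin n) → ℝ)
    (hdiff : Differentiable ℝ f)
    (hlip : ∀ y z : EuclideanSpace ℝ (Fin n),
      ‖gradient f y - gradient f z‖ ≤ L * ‖y - z‖)
    (x : Fin (n + 1) → EuclideanSpace ℝ (Fin n))
    (c : EuclideanSpace ℝ (Fin n)) (δ : ℝ) (hδ : 0 < δ)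
    (hc : c = (1 / (n + 1 : ℝ)) • ∑ i, x i)
    (hrad : ∀ i, ‖x i - c‖ = δ)
    (hinner : ∀ i j : Fin (n + 1), i ≠ j →
      (inner ℝ (x i - c) (x j - c) : ℝ) = -δ ^ 2 / n)
    (xr : EuclideanSpace ℝ (Fin n))
    (hxr : xr = -x (Fin.last n) + (2 / (n : ℝ)) • ∑ i : Fin n, x i.castSucc) :
    |f xr + f (x (Fin.last n)) - (2 / (n : ℝ)) * ∑ i : Fin n, f (x i.castSucc)|
      ≤ ((2 * n + 2 : ℝ) / n) * L * δ ^ 2 := by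
  have hn0 : (n : ℝ) ≠ 0 := Nat.cast_ne_zero.mpr (by omega)
  have hnpos : (0:ℝ) < n := by positivity
  set v : EuclideanSpace ℝ (Fin n) := x (Fin.last n) - c with hv
  set cb : EuclideanSpace ℝ (Fin n) := ((n:ℝ)⁻¹) • ∑ i : Fin n, x i.castSucc with hcb
  set g := gradient f cb with hg
  -- sum of deviations from centroid vanishes
  have hsum : ∑ i, (x i - c) = 0 := by
    rw [Finset.sum_sub_distrib, Finset.sum_const, Finset.card_univ, Fintype.card_fin,
        sub_eq_zero, ← Nat.cast_smul_eq_nsmul ℝ, hc, smul_smul]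
    have : ((n + 1 : ℕ) : ℝ) * (1 / ((n:ℝ) + 1)) = 1 := by
      push_cast; field_simp
    rw [this, one_smul]
  have hlastsum : ∑ i : Fin n, (x i.castSucc - c) = -v := by
    have h := hsum
    rw [Fin.sum_univ_castSucc] at h
    rw [hv]
    linear_combination (norm := module) h
  have hS : ∑ i : Fin n, x i.castSucc = (n:ℝ) • c - v := by
    have h1 : ∑ i : Fin n, x i.castSucc
        = ∑ i : Fin n, (x i.castSucc - c) + ∑ i : Fin n, c := by
      rw [← Finset.sum_add_distrib]; simp
    rw [h1, hlastsum, Finset.sum_const, Finset.card_univ, Fintype.card_fin,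
        ← Nat.cast_smul_eq_nsmul ℝ]
    module
  have hcb2 : cb = c - (n:ℝ)⁻¹ • v := by
    rw [hcb, hS, smul_sub, smul_smul, inv_mul_cancel₀ hn0, one_smul]
  have hlastcb : x (Fin.last n) - cb = (1 + (n:ℝ)⁻¹) • v := by
    rw [hcb2, hv]; module
  have hicb : ∀ i : Fin n, x i.castSucc - cb = (x i.castSucc - c) + (n:ℝ)⁻¹ • v := by
    intro i; rw [hcb2]; module
  have hxr2 : xr = -x (Fin.last n) + (2:ℝ) • cb := by
    rw [hxr, hcb, smul_smul, ← div_eq_mul_inv]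
  have hxrcb : xr - cb = -(x (Fin.last n) - cb) := by
    rw [hxr2]; module
  -- zero-sum facts for the linear terms
  have hzero1 : (xr - cb) + (x (Fin.last n) - cb) = 0 := by
    rw [hxrcb]; module
  have hzero2 : ∑ i : Fin n, (x i.castSucc - cb) = 0 := by
    calc ∑ i : Fin n, (x i.castSucc - cb)
        = ∑ i : Fin n, ((x i.castSucc - c) + (n:ℝ)⁻¹ • v) :=
          Finset.sum_congr rfl fun i _ => hicb i
      _ = ∑ i : Fin n, (x i.castSucc - c) + ∑ i : Fin n, (n:ℝ)⁻¹ • v :=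
          Finset.sum_add_distrib
      _ = -v + (n:ℝ) • ((n:ℝ)⁻¹ • v) := by
          rw [hlastsum, Finset.sum_const, Finset.card_univ, Fintype.card_fin,
            ← Nat.cast_smul_eq_nsmul ℝ]
      _ = 0 := by rw [smul_smul, mul_inv_cancel₀ hn0, one_smul]; module
  -- the second-order remainder
  set T : EuclideanSpace ℝ (Fin n) → ℝ := fun w => f w - f cb - ⟪g, w - cb⟫ with hT
  have h1 : ⟪g, xr - cb⟫ + ⟪g, x (Fin.last n) - cb⟫ = 0 := by
    rw [← inner_add_right, hzero1, inner_zero_right]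
  have h2 : ∑ i : Fin n, ⟪g, x i.castSucc - cb⟫ = 0 := by
    rw [← inner_sum, hzero2, inner_zero_right]
  have hsumT : ∑ i : Fin n, T (x i.castSucc)
      = (∑ i : Fin n, f (x i.castSucc)) - (n:ℝ) * f cb := by
    simp only [hT]
    rw [Finset.sum_sub_distrib, Finset.sum_sub_distrib, h2, sub_zero,
      Finset.sum_const, Finset.card_univ, Fintype.card_fin, nsmul_eq_mul]
  have key : f xr + f (x (Fin.last n)) - (2 / (n : ℝ)) * ∑ i : Fin n, f (x i.castSucc)
      = T xr + T (x (Fin.last n)) - (2 / (n : ℝ)) * ∑ i : Fin n, T (x i.castSucc) := by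
    rw [hsumT]
    simp only [hT]
    have h1' : ⟪g, xr - cb⟫ = -⟪g, x (Fin.last n) - cb⟫ := by linarith
    rw [h1']
    field_simp
    ring
  -- norms
  have hvnorm : ‖v‖ = δ := hrad (Fin.last n)
  have hnlast : ‖x (Fin.last n) - cb‖ ^ 2 = (1 + (n:ℝ)⁻¹) ^ 2 * δ ^ 2 := by
    rw [hlastcb, norm_smul, Real.norm_eq_abs, hvnorm, mul_pow, sq_abs]
  have hnxr : ‖xr - cb‖ = ‖x (Fin.last n) - cb‖ := by rw [hxrcb, norm_neg]
  have hni : ∀ i : Fin n, ‖x i.castSucc - cb‖ ^ 2 = δ ^ 2 - δ ^ 2 / (n:ℝ) ^ 2 := by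
    intro i
    have hne : (i.castSucc : Fin (n+1)) ≠ Fin.last n := (Fin.castSucc_lt_last i).ne
    rw [hicb i, norm_add_sq_real, hrad i.castSucc, real_inner_smul_right,
      hinner _ _ hne, norm_smul, Real.norm_eq_abs, hvnorm, mul_pow, sq_abs]
    field_simp
    ring
  -- Taylor bounds
  have bT : ∀ w, |T w| ≤ L / 2 * ‖w - cb‖ ^ 2 := by
    intro w
    simp only [hT, hg]
    exact taylor_descent hdiff hlip w cb
  have h2n : (0:ℝ) ≤ 2 / (n:ℝ) := by positivity
  have bsum : ∑ i : Fin n, |T (x i.castSucc)| ≤ (n:ℝ) * (L / 2 * (δ ^ 2 - δ ^ 2 / (n:ℝ) ^ 2)) := by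
    calc ∑ i : Fin n, |T (x i.castSucc)|
        ≤ ∑ i : Fin n, L / 2 * (δ ^ 2 - δ ^ 2 / (n:ℝ) ^ 2) := by
          apply Finset.sum_le_sum
          intro i _
          have := bT (x i.castSucc)
          rwa [hni i] at this
      _ = (n:ℝ) * (L / 2 * (δ ^ 2 - δ ^ 2 / (n:ℝ) ^ 2)) := by
          rw [Finset.sum_const, Finset.card_univ, Fintype.card_fin, nsmul_eq_mul]
  have bxr : |T xr| ≤ L / 2 * ((1 + (n:ℝ)⁻¹) ^ 2 * δ ^ 2) := by
    have := bT xr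
    rwa [hnxr, hnlast] at this
  have blast : |T (x (Fin.last n))| ≤ L / 2 * ((1 + (n:ℝ)⁻¹) ^ 2 * δ ^ 2) := by
    have := bT (x (Fin.last n))
    rwa [hnlast] at this
  have habs : |f xr + f (x (Fin.last n)) - (2 / (n : ℝ)) * ∑ i : Fin n, f (x i.castSucc)|
      ≤ |T xr| + |T (x (Fin.last n))| + (2 / (n:ℝ)) * ∑ i : Fin n, |T (x i.castSucc)| := by
    rw [key]
    calc |T xr + T (x (Fin.last n)) - (2 / (n : ℝ)) * ∑ i : Fin n, T (x i.castSucc)|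
        ≤ |T xr + T (x (Fin.last n))| + |(2 / (n : ℝ)) * ∑ i : Fin n, T (x i.castSucc)| :=
          abs_sub _ _
      _ ≤ |T xr| + |T (x (Fin.last n))| + (2 / (n:ℝ)) * ∑ i : Fin n, |T (x i.castSucc)| := by
          gcongr ?_ + ?_
          · exact abs_add_le _ _
          · rw [abs_mul, abs_of_nonneg h2n]
            gcongr
            exact Finset.abs_sum_le_sum_abs _ _
  calc |f xr + f (x (Fin.last n)) - (2 / (n : ℝ)) * ∑ i : Fin n, f (x i.castSucc)|
      ≤ |T xr| + |T (x (Fin.last n))| + (2 / (n:ℝ)) * ∑ i : Fin n, |T (x i.castSucc)| := habs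
    _ ≤ L / 2 * ((1 + (n:ℝ)⁻¹) ^ 2 * δ ^ 2) + L / 2 * ((1 + (n:ℝ)⁻¹) ^ 2 * δ ^ 2)
        + (2 / (n:ℝ)) * ((n:ℝ) * (L / 2 * (δ ^ 2 - δ ^ 2 / (n:ℝ) ^ 2))) := by
          gcongr
    _ = ((2 * n + 2 : ℝ) / n) * L * δ ^ 2 := by
          field_simp
          ring
end

section
/- Let f : R^n → R be convex and L-smooth, and let Θ be a regular simplex of radius δ with reflection point x_r = −x_{n+1} + (2/n)·Σ_{i=1}^n x_i. Then |f(x_r) + f(x_{n+1}) − (2/n)·Σ_{i=1}^n f(x_i)| ≤ (1 + 1/n)²·L·δ². -/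
section AuxLemmas

open InnerProductSpace

variable {E : Type*} [NormedAddCommGroup E] [InnerProductSpace ℝ E] [CompleteSpace E]

lemma hasDerivAt_comp_line {f : E → ℝ} (hdiff : Differentiable ℝ f) (w v : E) (t : ℝ) :
    HasDerivAt (fun s : ℝ => f (w + s • v)) (inner ℝ (gradient f (w + t • v)) v : ℝ) t := by
  have hg := (hdiff (w + t • v)).hasGradientAt
  rw [hasGradientAt_iff_hasFDerivAt] at hg
  have hline : HasDerivAt (fun s : ℝ => w + s • v) v t := by
    simpa using ((hasDerivAt_id t).smul_const v).const_add w
  have := hg.comp_hasDerivAt t hline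
  simpa [toDual_apply_apply, Function.comp_def] using this

lemma convex_lower {f : E → ℝ} (hconv : ConvexOn ℝ Set.univ f)
    (hdiff : Differentiable ℝ f) (w z : E) :
    f w + (inner ℝ (gradient f w) (z - w) : ℝ) ≤ f z := by
  set v := z - w with hv
  have hφconv : ConvexOn ℝ Set.univ (fun s : ℝ => f (w + s • v)) := by
    have := hconv.comp_affineMap (AffineMap.lineMap w z : ℝ →ᵃ[ℝ] E)
    have he : ∀ s : ℝ, (AffineMap.lineMap w z : ℝ →ᵃ[ℝ] E) s = w + s • v := by
      intro s
      simp [AffineMap.lineMap_apply, hv]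
      abel
    have h2 : ConvexOn ℝ Set.univ (f ∘ (AffineMap.lineMap w z : ℝ →ᵃ[ℝ] E)) :=
      this.subset (by simp) convex_univ
    convert h2 using 1
    funext s
    simp only [Function.comp_apply, he s]
  have hd0 := hasDerivAt_comp_line hdiff w v 0
  have h01 : (0:ℝ) < 1 := one_pos
  have hsl := hφconv.le_slope_of_hasDerivAt (Set.mem_univ 0) (Set.mem_univ 1) h01 hd0
  rw [slope_def_field] at hsl
  simp only [zero_smul, add_zero, one_smul] at hsl hd0 ⊢
  have : w + v = z := by rw [hv]; abel
  rw [this] at hsl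
  rw [sub_zero, div_one] at hsl
  linarith [hsl]

lemma descent_lemma {f : E → ℝ} {L : ℝ} (hL : 0 ≤ L)
    (hdiff : Differentiable ℝ f)
    (hlip : ∀ y z : E, ‖gradient f y - gradient f z‖ ≤ L * ‖y - z‖) (w z : E) :
    f z ≤ f w + (inner ℝ (gradient f w) (z - w) : ℝ) + L / 2 * ‖z - w‖ ^ 2 := by
  set v := z - w with hv
  set φ' : ℝ → ℝ := fun t => (inner ℝ (gradient f (w + t • v)) v : ℝ) with hφ'
  have hderiv : ∀ t ∈ Set.uIcc (0:ℝ) 1,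
      HasDerivAt (fun s : ℝ => f (w + s • v)) (φ' t) t := fun t _ =>
    hasDerivAt_comp_line hdiff w v t
  have hgradcont : Continuous (gradient f) := by
    rcases le_or_gt L 0 with h | h
    · have : ∀ y z : E, gradient f y = gradient f z := by
        intro y z
        have := hlip y z
        have h2 : L * ‖y - z‖ ≤ 0 := mul_nonpos_of_nonpos_of_nonneg h (norm_nonneg _)
        have := le_trans this h2
        rwa [norm_le_zero_iff, sub_eq_zero] at this
      have : gradient f = fun _ => gradient f 0 := funext fun y => this y 0
      rw [this]; exact continuous_const
    · exact (LipschitzWith.of_dist_le_mul (K := ⟨L, h.le⟩) (fun a b => by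
        rw [dist_eq_norm, dist_eq_norm]; exact hlip a b)).continuous
  have hφ'cont : Continuous φ' := by
    apply Continuous.inner
    · exact hgradcont.comp (by continuity)
    · exact continuous_const
  have hint : IntervalIntegrable φ' MeasureTheory.volume 0 1 := hφ'cont.intervalIntegrable 0 1
  have hftc : ∫ t in (0:ℝ)..1, φ' t = f (w + (1:ℝ) • v) - f (w + (0:ℝ) • v) :=
    intervalIntegral.integral_eq_sub_of_hasDerivAt hderiv hint
  have hbound : ∀ t ∈ Set.Icc (0:ℝ) 1, φ' t ≤ φ' 0 + (L * ‖v‖ ^ 2) * t := by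
    intro t ht
    have h1 : φ' t - φ' 0 = (inner ℝ (gradient f (w + t • v) - gradient f w) v : ℝ) := by
      simp [hφ', inner_sub_left]
    have h2 : (inner ℝ (gradient f (w + t • v) - gradient f w) v : ℝ)
        ≤ ‖gradient f (w + t • v) - gradient f w‖ * ‖v‖ :=
      real_inner_le_norm _ _
    have h3 : ‖gradient f (w + t • v) - gradient f w‖ ≤ L * (t * ‖v‖) := by
      have := hlip (w + t • v) w
      simpa [norm_smul, abs_of_nonneg ht.1] using this
    nlinarith [norm_nonneg v, ht.1]
  have hmono : ∫ t in (0:ℝ)..1, φ' t ≤ ∫ t in (0:ℝ)..1, (φ' 0 + (L * ‖v‖ ^ 2) * t) := by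
    apply intervalIntegral.integral_mono_on zero_le_one hint
    · exact (Continuous.intervalIntegrable (by continuity) 0 1)
    · exact hbound
  have hrhs : ∫ t in (0:ℝ)..1, (φ' 0 + (L * ‖v‖ ^ 2) * t) = φ' 0 + L * ‖v‖ ^ 2 / 2 := by
    rw [intervalIntegral.integral_add (intervalIntegrable_const)
      ((continuous_mul_left (L * ‖v‖ ^ 2)).intervalIntegrable 0 1),
      intervalIntegral.integral_const_mul, integral_id]
    norm_num
    ring
  have h0 : φ' 0 = (inner ℝ (gradient f w) (z - w) : ℝ) := by simp [hφ', hv]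
  have h1 : w + (1:ℝ) • v = z := by rw [hv]; simp
  have h0' : w + (0:ℝ) • v = w := by simp
  rw [h1, h0'] at hftc
  have : f z - f w ≤ φ' 0 + L * ‖v‖ ^ 2 / 2 := by
    rw [← hftc, ← hrhs]; exact hmono
  rw [h0] at this
  have hnv : ‖v‖ = ‖z - w‖ := by rw [hv]
  nlinarith [this]

end AuxLemmas

set_option maxHeartbeats 1000000 in
/-- Reflection extrapolation error bound (convex case): for a convex `L`-smooth
`f` and a regular simplex of radius `δ`,
`|f(x_r) + f(x_{n+1}) − (2/n)·∑_{i≤n} f(x_i)| ≤ (1 + 1/n)²·L·δ²`. -/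
theorem reflection_error_bound_convex (n : ℕ) (hn : 1 ≤ n) (L : ℝ) (hL : 0 < L)
    (f : EuclideanSpace ℝ (Fin n) → ℝ)
    (hconv : ConvexOn ℝ Set.univ f)
    (hdiff : Differentiable ℝ f)
    (hlip : ∀ y z : EuclideanSpace ℝ (Fin n),
      ‖gradient f y - gradient f z‖ ≤ L * ‖y - z‖)
    (x : Fin (n + 1) → EuclideanSpace ℝ (Fin n))
    (c : EuclideanSpace ℝ (Fin n)) (δ : ℝ) (hδ : 0 < δ)
    (hc : c = (1 / (n + 1 : ℝ)) • ∑ i, x i)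
    (hrad : ∀ i, ‖x i - c‖ = δ)
    (hinner : ∀ i j : Fin (n + 1), i ≠ j →
      (inner ℝ (x i - c) (x j - c) : ℝ) = -δ ^ 2 / n)
    (xr : EuclideanSpace ℝ (Fin n))
    (hxr : xr = -x (Fin.last n) + (2 / (n : ℝ)) • ∑ i : Fin n, x i.castSucc) :
    |f xr + f (x (Fin.last n)) - (2 / (n : ℝ)) * ∑ i : Fin n, f (x i.castSucc)|
      ≤ (1 + 1 / (n : ℝ)) ^ 2 * L * δ ^ 2 := by
  have hnpos : (0:ℝ) < n := by exact_mod_cast hn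
  have hn0 : (n : ℝ) ≠ 0 := ne_of_gt hnpos
  have hn1 : (n : ℝ) + 1 ≠ 0 := by positivity
  obtain ⟨xl, hxl⟩ : ∃ xl, xl = x (Fin.last n) := ⟨_, rfl⟩
  obtain ⟨S, hS⟩ : ∃ S, S = ∑ i : Fin n, x i.castSucc := ⟨_, rfl⟩
  rw [← hxl, ← hS] at hxr
  rw [← hxl]
  rw [Fin.sum_univ_castSucc, ← hS, ← hxl] at hc
  have hradl : ‖xl - c‖ = δ := by rw [hxl]; exact hrad _
  have hinner' : ∀ i : Fin n, (inner ℝ (x i.castSucc - c) (xl - c) : ℝ) = -δ ^ 2 / n := by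
    intro i
    rw [hxl]
    exact hinner _ _ (Fin.castSucc_lt_last i).ne
  have hxrl : xr + xl = (2/(n:ℝ)) • S := by rw [hxr]; abel
  have h2n : (2/(n:ℝ)) * n = 2 := by field_simp
  -- key identity
  have hkey : ∀ w : EuclideanSpace ℝ (Fin n),
      f xr + f xl - (2 / (n : ℝ)) * ∑ i : Fin n, f (x i.castSucc)
      = (f xr - f w - inner ℝ (gradient f w) (xr - w))
        + (f xl - f w - inner ℝ (gradient f w) (xl - w))
        - (2 / (n : ℝ)) * ∑ i : Fin n,
            (f (x i.castSucc) - f w - (inner ℝ (gradient f w) (x i.castSucc - w) : ℝ)) := by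
    intro w
    have hP : (inner ℝ (gradient f w) xr : ℝ) + inner ℝ (gradient f w) xl
        = (2/(n:ℝ)) * inner ℝ (gradient f w) S := by
      rw [← inner_add_right, hxrl, real_inner_smul_right]
    have hPS : ∑ i : Fin n, (inner ℝ (gradient f w) (x i.castSucc) : ℝ)
        = inner ℝ (gradient f w) S := by rw [hS, inner_sum]
    have hsum2 : ∑ i : Fin n,
        (f (x i.castSucc) - f w - ((inner ℝ (gradient f w) (x i.castSucc) : ℝ)
          - inner ℝ (gradient f w) w))
        = (∑ i : Fin n, f (x i.castSucc)) - n * f w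
          - ((inner ℝ (gradient f w) S : ℝ) - n * inner ℝ (gradient f w) w) := by
      rw [Finset.sum_sub_distrib, Finset.sum_sub_distrib, Finset.sum_sub_distrib, hPS,
        Finset.sum_const, Finset.sum_const, Finset.card_univ, Fintype.card_fin,
        nsmul_eq_mul, nsmul_eq_mul]
    simp only [inner_sub_right]
    rw [hsum2]
    linear_combination hP - (f w - (inner ℝ (gradient f w) w : ℝ)) * h2n
  -- upper bound
  obtain ⟨w1, hw1def⟩ : ∃ w1, w1 = (2⁻¹ : ℝ) • (xr + xl) := ⟨_, rfl⟩
  have hw1a : xr - w1 = (((n:ℝ)+1)/n) • (c - xl) := by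
    rw [hw1def, hxr, hc]
    match_scalars <;> field_simp <;> ring
  have hw1b : xl - w1 = -(xr - w1) := by rw [hw1def]; module
  have hnorm1 : ‖xr - w1‖ = ((n:ℝ)+1)/n * δ := by
    rw [hw1a, norm_smul, norm_sub_rev, hradl, Real.norm_eq_abs,
      abs_of_pos (by positivity)]
  have hnorm2 : ‖xl - w1‖ = ((n:ℝ)+1)/n * δ := by rw [hw1b, norm_neg, hnorm1]
  have hco : 1 + 1/(n:ℝ) = ((n:ℝ)+1)/n := by field_simp
  have hup : f xr + f xl - (2 / (n : ℝ)) * ∑ i : Fin n, f (x i.castSucc)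
      ≤ (1 + 1 / (n : ℝ)) ^ 2 * L * δ ^ 2 := by
    rw [hkey w1]
    have hA := descent_lemma hL.le hdiff hlip w1 xr
    have hB := descent_lemma hL.le hdiff hlip w1 xl
    rw [hnorm1] at hA
    rw [hnorm2] at hB
    have h3 : 0 ≤ ∑ i : Fin n,
        (f (x i.castSucc) - f w1 - (inner ℝ (gradient f w1) (x i.castSucc - w1) : ℝ)) :=
      Finset.sum_nonneg fun i _ => by linarith [convex_lower hconv hdiff w1 (x i.castSucc)]
    have h4 : 0 ≤ 2/(n:ℝ) := by positivity
    have h5 : (1+1/(n:ℝ))^2*L*δ^2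
        = L/2*((((n:ℝ)+1)/n*δ))^2 + L/2*((((n:ℝ)+1)/n*δ))^2 := by rw [hco]; ring
    rw [h5]
    nlinarith [mul_nonneg h4 h3]
  -- lower bound
  obtain ⟨w2, hw2def⟩ : ∃ w2, w2 = (n:ℝ)⁻¹ • S := ⟨_, rfl⟩
  have hw2i : ∀ i : Fin n, x i.castSucc - w2
      = (x i.castSucc - c) + (n:ℝ)⁻¹ • (xl - c) := by
    intro i
    rw [hw2def, hc]
    match_scalars <;> field_simp <;> ring
  have hnormi : ∀ i : Fin n, ‖x i.castSucc - w2‖^2 = (1 - 1/(n:ℝ)^2) * δ^2 := by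
    intro i
    rw [hw2i i, norm_add_sq_real, real_inner_smul_right, hinner' i, norm_smul,
      hrad, hradl, Real.norm_eq_abs, abs_of_pos (by positivity : (0:ℝ) < (n:ℝ)⁻¹)]
    field_simp
    ring
  have hDi : ∀ i : Fin n,
      f (x i.castSucc) - f w2 - (inner ℝ (gradient f w2) (x i.castSucc - w2) : ℝ)
        ≤ L/2 * ((1 - 1/(n:ℝ)^2) * δ^2) := by
    intro i
    have h := descent_lemma hL.le hdiff hlip w2 (x i.castSucc)
    rw [hnormi i] at h
    linarith
  have hsumD : ∑ i : Fin n,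
      (f (x i.castSucc) - f w2 - (inner ℝ (gradient f w2) (x i.castSucc - w2) : ℝ))
        ≤ n * (L/2 * ((1 - 1/(n:ℝ)^2) * δ^2)) := by
    calc _ ≤ ∑ _i : Fin n, L/2 * ((1 - 1/(n:ℝ)^2) * δ^2) :=
          Finset.sum_le_sum fun i _ => hDi i
      _ = n * (L/2 * ((1 - 1/(n:ℝ)^2) * δ^2)) := by
          simp [Finset.sum_const, Finset.card_univ, nsmul_eq_mul]
  have hlow : -((1 + 1 / (n : ℝ)) ^ 2 * L * δ ^ 2)
      ≤ f xr + f xl - (2 / (n : ℝ)) * ∑ i : Fin n, f (x i.castSucc) := by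
    rw [hkey w2]
    have hXr := convex_lower hconv hdiff w2 xr
    have hXl := convex_lower hconv hdiff w2 xl
    have h4 : 0 ≤ 2/(n:ℝ) := by positivity
    have h6 := mul_le_mul_of_nonneg_left hsumD h4
    have h7 : (2/(n:ℝ))*((n:ℝ) * (L/2 * ((1-1/(n:ℝ)^2)*δ^2)))
        = (1-1/(n:ℝ)^2)*(L*δ^2) := by
      linear_combination (L/2 * ((1-1/(n:ℝ)^2)*δ^2)) * h2n
    rw [h7] at h6
    have h8 : (1-1/(n:ℝ)^2)*(L*δ^2) ≤ (1 + 1/(n:ℝ))^2 * L * δ^2 := by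
      clear * - hL hδ hnpos
      have ha : 0 ≤ 1/(n:ℝ) := by positivity
      have hK : 0 < L * δ ^ 2 := mul_pos hL (pow_pos hδ 2)
      have hab : 1/(n:ℝ)^2 = (1/(n:ℝ))^2 := by ring
      calc (1-1/(n:ℝ)^2)*(L*δ^2) ≤ (1+1/(n:ℝ))^2*(L*δ^2) := by
            apply mul_le_mul_of_nonneg_right _ hK.le
            rw [hab]
            nlinarith [ha, sq_nonneg (1/(n:ℝ))]
        _ = (1+1/(n:ℝ))^2*L*δ^2 := by ring
    clear * - hXr hXl h6 h8
    linarith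
  rw [abs_le]
  exact ⟨hlow, hup⟩
end

section
/- Suppose f : R^n → R is L-smooth with minimum f*, and at iteration k of RSSM the regular simplex has radius δ_k and centroid c_k. If the reflection is rejected, i.e., f(x_r) − f(x_{n+1}) > −((2n+2)/n)·β·L·δ_k², then ((β+1)n + √n/2)·L·δ_k ≥ ‖∇f(c_k)‖. Consequently, if δ_k ≤ ‖∇f(c_k)‖ / (L·((β+1)n + √n/2)), then the reflection is accepted. -/
open scoped RealInnerProductSpace
open Finset

lemma taylor_abs {n : ℕ} (f : EuclideanSpace ℝ (Fin n) → ℝ) (hdiff : Differentiable ℝ f)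
    {L : ℝ} (hL : 0 ≤ L)
    (hlip : ∀ y z, ‖gradient f y - gradient f z‖ ≤ L * ‖y - z‖)
    (z y : EuclideanSpace ℝ (Fin n)) :
    |f y - f z - ⟪gradient f z, y - z⟫| ≤ L / 2 * ‖y - z‖ ^ 2 := by
  set v := y - z with hv
  have hderiv : ∀ t : ℝ, HasDerivAt (fun t : ℝ => f (z + t • v))
      (⟪gradient f (z + t • v), v⟫) t := by
    intro t
    have hγ : HasDerivAt (fun t : ℝ => z + t • v) v t := by
      simpa using ((hasDerivAt_id t).smul_const v).const_add z
    have hg := (hdiff (z + t • v)).hasGradientAt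
    rw [hasGradientAt_iff_hasFDerivAt] at hg
    have := hg.comp_hasDerivAt t hγ
    simpa [Function.comp_def] using this
  have hgradcont : Continuous (gradient f) := by
    have : LipschitzWith (Real.toNNReal L) (gradient f) := by
      apply LipschitzWith.of_dist_le_mul
      intro a b
      rw [dist_eq_norm, dist_eq_norm, Real.coe_toNNReal _ hL]
      exact hlip a b
    exact this.continuous
  have hcont : Continuous fun t : ℝ => (⟪gradient f (z + t • v), v⟫ : ℝ) :=
    Continuous.inner (hgradcont.comp (by continuity)) continuous_const
  have hint : IntervalIntegrable (fun t : ℝ => (⟪gradient f (z + t • v), v⟫ : ℝ)) MeasureTheory.volume 0 1 :=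
    hcont.intervalIntegrable 0 1
  have hftc : ∫ t in (0:ℝ)..1, ⟪gradient f (z + t • v), v⟫ = f y - f z := by
    have := intervalIntegral.integral_eq_sub_of_hasDerivAt
      (f := fun t : ℝ => f (z + t • v))
      (f' := fun t : ℝ => ⟪gradient f (z + t • v), v⟫)
      (fun t _ => hderiv t) hint
    simpa [hv] using this
  have key : f y - f z - ⟪gradient f z, v⟫
      = ∫ t in (0:ℝ)..1, (⟪gradient f (z + t • v) - gradient f z, v⟫ : ℝ) := by
    have : (∫ t in (0:ℝ)..1, (⟪gradient f (z + t • v) - gradient f z, v⟫ : ℝ))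
        = (∫ t in (0:ℝ)..1, (⟪gradient f (z + t • v), v⟫ : ℝ))
          - ∫ t in (0:ℝ)..1, (⟪gradient f z, v⟫ : ℝ) := by
      rw [← intervalIntegral.integral_sub hint intervalIntegrable_const]
      congr 1; funext t; rw [inner_sub_left]
    rw [this, hftc]; simp
  rw [key]
  have hbound : ∀ t ∈ Set.Ioc (0:ℝ) 1,
      |(⟪gradient f (z + t • v) - gradient f z, v⟫ : ℝ)| ≤ L * ‖v‖ ^ 2 * t := by
    intro t ht
    calc |(⟪gradient f (z + t • v) - gradient f z, v⟫ : ℝ)|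
        ≤ ‖gradient f (z + t • v) - gradient f z‖ * ‖v‖ := abs_real_inner_le_norm _ _
      _ ≤ (L * ‖(z + t • v) - z‖) * ‖v‖ :=
          mul_le_mul_of_nonneg_right (hlip _ _) (norm_nonneg _)
      _ = L * ‖v‖ ^ 2 * t := by
          rw [add_sub_cancel_left, norm_smul, Real.norm_eq_abs, abs_of_pos ht.1]; ring
  have hgint : IntervalIntegrable (fun t : ℝ => L * ‖v‖ ^ 2 * t) MeasureTheory.volume 0 1 :=
    (continuous_const.mul continuous_id).intervalIntegrable 0 1
  have h1 : ∀ᵐ t ∂(MeasureTheory.volume.restrict (Set.uIoc (0:ℝ) 1)),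
      ‖(⟪gradient f (z + t • v) - gradient f z, v⟫ : ℝ)‖ ≤ L * ‖v‖ ^ 2 * t := by
    filter_upwards [MeasureTheory.ae_restrict_mem measurableSet_uIoc] with t ht
    rw [Set.uIoc_of_le (by norm_num : (0:ℝ) ≤ 1)] at ht
    exact hbound t ht
  have h2 := intervalIntegral.norm_integral_le_abs_of_norm_le h1 hgint
  have hval : ∫ t in (0:ℝ)..1, L * ‖v‖ ^ 2 * t = L / 2 * ‖v‖ ^ 2 := by
    rw [intervalIntegral.integral_const_mul, integral_id]; ring
  rw [hval, Real.norm_eq_abs] at h2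
  calc |∫ t in (0:ℝ)..1, (⟪gradient f (z + t • v) - gradient f z, v⟫ : ℝ)|
      ≤ |L / 2 * ‖v‖ ^ 2| := h2
    _ = L / 2 * ‖v‖ ^ 2 := abs_of_nonneg (by positivity)

lemma sum_sq_le_of_sum_eq_zero {m : ℕ} (b : Fin (m + 1) → ℝ)
    (hsum : ∑ i, b i = 0) {M : ℝ} (hM : ∀ i, b i ≤ M) :
    ∑ i, b i ^ 2 ≤ m * (m + 1) * M ^ 2 := by
  have hM0 : 0 ≤ M := by
    by_contra h
    push_neg at h
    have : ∑ i, b i < ∑ i : Fin (m+1), (0:ℝ) :=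
      Finset.sum_lt_sum_of_nonempty ⟨0, mem_univ 0⟩ (fun i _ => (hM i).trans_lt h)
    simp [hsum] at this
  have hlb : ∀ i, -(m * M) ≤ b i := by
    intro i
    have h1 : ∑ j ∈ univ.erase i, b j ≤ m * M := by
      have := Finset.sum_le_card_nsmul (univ.erase i) b M (fun j _ => hM j)
      rwa [Finset.card_erase_of_mem (mem_univ i), Finset.card_univ, Fintype.card_fin,
        Nat.add_sub_cancel, nsmul_eq_mul] at this
    have h2 : b i + ∑ j ∈ univ.erase i, b j = 0 := by
      rw [Finset.add_sum_erase univ b (mem_univ i), hsum]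
    linarith
  have key : ∀ i, b i ^ 2 ≤ m * M ^ 2 + (1 - m) * M * b i := by
    intro i
    nlinarith [mul_nonneg (sub_nonneg.2 (hM i)) (by linarith [hlb i] : (0:ℝ) ≤ b i + m * M)]
  calc ∑ i, b i ^ 2 ≤ ∑ i : Fin (m+1), (m * M ^ 2 + (1 - m) * M * b i) :=
        Finset.sum_le_sum (fun i _ => key i)
    _ = (m + 1) * (m * M ^ 2) + (1 - m) * M * ∑ i, b i := by
        rw [Finset.sum_add_distrib, Finset.sum_const, ← Finset.mul_sum, Finset.card_univ,
          Fintype.card_fin, nsmul_eq_mul]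
        push_cast; ring
    _ = m * (m + 1) * M ^ 2 := by rw [hsum]; ring

lemma simplex_isotropy {n : ℕ} (hn : 1 ≤ n) (u : Fin (n + 1) → EuclideanSpace ℝ (Fin n))
    {δ : ℝ} (hδ : 0 < δ) (hsum : ∑ i, u i = 0) (hnorm : ∀ i, ‖u i‖ = δ)
    (hip : ∀ i j : Fin (n + 1), i ≠ j → ⟪u i, u j⟫ = -δ ^ 2 / n)
    (g : EuclideanSpace ℝ (Fin n)) :
    ∑ i, ⟪g, u i⟫ ^ 2 = (n + 1) / n * δ ^ 2 * ‖g‖ ^ 2 := by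
  have hn0 : (0:ℝ) < n := by exact_mod_cast hn
  have hne : Nonempty (Fin n) := ⟨⟨0, hn⟩⟩
  have hself : ∀ i, ⟪u i, u i⟫ = δ ^ 2 := by
    intro i; rw [real_inner_self_eq_norm_sq, hnorm]
  have hsumg : ∀ w : EuclideanSpace ℝ (Fin n), ∑ i, ⟪w, u i⟫ = 0 := by
    intro w; rw [← inner_sum, hsum, inner_zero_right]
  -- linear independence of the first n vectors
  have hLI : LinearIndependent ℝ (fun i : Fin n => u i.castSucc) := by
    rw [Fintype.linearIndependent_iff]
    intro t ht
    have hnormsq : (0:ℝ)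
        = ∑ i : Fin n, ⟪t i • u i.castSucc, ∑ j : Fin n, t j • u j.castSucc⟫ := by
      rw [← sum_inner, ht, inner_zero_left]
    have hexp : ∑ i : Fin n, ⟪t i • u i.castSucc, ∑ j : Fin n, t j • u j.castSucc⟫
        = (∑ i : Fin n, t i ^ 2) * δ ^ 2
          + ((∑ i : Fin n, t i) ^ 2 - ∑ i : Fin n, t i ^ 2) * (-δ ^ 2 / n) := by
      have step1 : ∀ i : Fin n, ⟪t i • u i.castSucc, ∑ j : Fin n, t j • u j.castSucc⟫
          = ∑ j : Fin n, t i * t j * ⟪u i.castSucc, u j.castSucc⟫ := by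
        intro i
        rw [inner_sum]
        congr 1; funext j
        rw [real_inner_smul_left, real_inner_smul_right]; ring
      have step2 : ∀ i : Fin n, ∑ j : Fin n, t i * t j * ⟪u i.castSucc, u j.castSucc⟫
          = t i ^ 2 * δ ^ 2 + (t i * ((∑ j : Fin n, t j) - t i)) * (-δ ^ 2 / n) := by
        intro i
        rw [← Finset.add_sum_erase univ _ (mem_univ i), hself]
        congr 1
        · ring
        · have he : ∀ j ∈ univ.erase i, t i * t j * ⟪u i.castSucc, u j.castSucc⟫
              = t i * t j * (-δ ^ 2 / n) := by
            intro j hj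
            rw [hip _ _ (fun h => (Finset.mem_erase.1 hj).1
              (Fin.castSucc_injective n h.symm))]
          rw [Finset.sum_congr rfl he, ← Finset.sum_mul, ← Finset.mul_sum,
            Finset.sum_erase_eq_sub (mem_univ i)]
      rw [Finset.sum_congr rfl (fun i _ => step1 i), Finset.sum_congr rfl (fun i _ => step2 i),
        Finset.sum_add_distrib]
      congr 1
      · rw [← Finset.sum_mul]
      · rw [← Finset.sum_mul]
        congr 1
        have h3 : ∀ i : Fin n, t i * ((∑ j : Fin n, t j) - t i)
            = t i * (∑ j : Fin n, t j) - t i ^ 2 := fun i => by ring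
        rw [Finset.sum_congr rfl (fun i _ => h3 i), Finset.sum_sub_distrib, ← Finset.sum_mul]
        ring
    rw [hexp] at hnormsq
    have hcs : (∑ i : Fin n, t i) ^ 2 ≤ (n : ℝ) * ∑ i : Fin n, t i ^ 2 := by
      have := sq_sum_le_card_mul_sum_sq (s := (univ : Finset (Fin n))) (f := t)
      simpa using this
    have hT0 : (0:ℝ) ≤ ∑ i : Fin n, t i ^ 2 :=
      Finset.sum_nonneg (fun i _ => sq_nonneg _)
    have hT : ∑ i : Fin n, t i ^ 2 = 0 := by
      by_contra hne'
      have hpos : 0 < ∑ i : Fin n, t i ^ 2 := lt_of_le_of_ne hT0 (Ne.symm hne')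
      have hd2 : 0 < δ ^ 2 := by positivity
      have h := hnormsq
      field_simp at h
      nlinarith [mul_le_mul_of_nonneg_right hcs hd2.le, mul_pos hd2 hpos]
    intro i
    have := (Finset.sum_eq_zero_iff_of_nonneg (fun i _ => sq_nonneg (t i))).1 hT i (mem_univ i)
    exact (pow_eq_zero_iff two_ne_zero).1 this
  have hspan : Submodule.span ℝ (Set.range fun i : Fin n => u i.castSucc) = ⊤ :=
    hLI.span_eq_top_of_card_eq_finrank (by simp)
  set lam : ℝ := (n + 1) / n * δ ^ 2 with hlam
  set w : EuclideanSpace ℝ (Fin n) := (∑ i, ⟪g, u i⟫ • u i) - lam • g with hw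
  have horth : ∀ j : Fin (n + 1), ⟪u j, w⟫ = 0 := by
    intro j
    rw [hw, inner_sub_right, inner_sum]
    have hterm : ∀ i, ⟪u j, ⟪g, u i⟫ • u i⟫ = ⟪g, u i⟫ * ⟪u j, u i⟫ := fun i =>
      real_inner_smul_right _ _ _
    rw [Finset.sum_congr rfl (fun i _ => hterm i)]
    have hsplit : ∑ i, ⟪g, u i⟫ * ⟪u j, u i⟫
        = ⟪g, u j⟫ * δ ^ 2 + (∑ i ∈ univ.erase j, ⟪g, u i⟫) * (-δ ^ 2 / n) := by
      rw [← Finset.add_sum_erase univ _ (mem_univ j), hself]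
      congr 1
      have he2 : ∀ i ∈ univ.erase j, ⟪g, u i⟫ * ⟪u j, u i⟫ = ⟪g, u i⟫ * (-δ ^ 2 / n) := by
        intro i hi
        rw [hip j i (fun h => (Finset.mem_erase.1 hi).1 h.symm)]
      rw [Finset.sum_congr rfl he2, ← Finset.sum_mul]
    have herase : ∑ i ∈ univ.erase j, ⟪g, u i⟫ = -⟪g, u j⟫ := by
      rw [Finset.sum_erase_eq_sub (mem_univ j), hsumg g]; ring
    rw [hsplit, herase, real_inner_smul_right, real_inner_comm (u j) g, hlam]
    field_simp
    ring
  have hw0 : w = 0 := by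
    have hmem : w ∈ (Submodule.span ℝ (Set.range fun i : Fin n => u i.castSucc))ᗮ := by
      rw [Submodule.mem_orthogonal]
      intro v hv
      refine Submodule.span_induction ?_ ?_ ?_ ?_ hv
      · rintro _ ⟨i, rfl⟩; exact horth _
      · rw [inner_zero_left]
      · intro a b _ _ ha hb; rw [inner_add_left, ha, hb, add_zero]
      · intro r a _ ha; rw [real_inner_smul_left, ha, mul_zero]
    rw [hspan, Submodule.top_orthogonal_eq_bot] at hmem
    exact (Submodule.mem_bot ℝ).1 hmem
  have heig : ∑ i, ⟪g, u i⟫ • u i = lam • g := by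
    rw [hw] at hw0; rwa [sub_eq_zero] at hw0
  calc ∑ i, ⟪g, u i⟫ ^ 2 = ⟪g, ∑ i, ⟪g, u i⟫ • u i⟫ := by
        rw [inner_sum]
        apply Finset.sum_congr rfl
        intro i _
        rw [real_inner_smul_right]; ring
    _ = lam * ‖g‖ ^ 2 := by
        rw [heig, real_inner_smul_right, real_inner_self_eq_norm_sq]

lemma reflection_expansion {n : ℕ} (hn : 1 ≤ n) (L : ℝ) (hL : 0 < L)
    (f : EuclideanSpace ℝ (Fin n) → ℝ) (hdiff : Differentiable ℝ f)
    (hlip : ∀ y z : EuclideanSpace ℝ (Fin n),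
      ‖gradient f y - gradient f z‖ ≤ L * ‖y - z‖)
    (x : Fin (n + 1) → EuclideanSpace ℝ (Fin n))
    (c : EuclideanSpace ℝ (Fin n)) (δ : ℝ) (hδ : 0 < δ)
    (hc : c = (1 / (n + 1 : ℝ)) • ∑ i, x i)
    (hrad : ∀ i, ‖x i - c‖ = δ)
    (hinner : ∀ i j : Fin (n + 1), i ≠ j →
      (inner ℝ (x i - c) (x j - c) : ℝ) = -δ ^ 2 / n)
    (xr : EuclideanSpace ℝ (Fin n))
    (hxr : xr = -x (Fin.last n) + (2 / (n : ℝ)) • ∑ i : Fin n, x i.castSucc) :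
    |f xr + f (x (Fin.last n)) - (2 / n) * ∑ i : Fin n, f (x i.castSucc)|
      ≤ (2 * n + 2) / n * L * δ ^ 2 := by
  have hn0 : (0:ℝ) < n := by exact_mod_cast hn
  set u : Fin (n + 1) → EuclideanSpace ℝ (Fin n) := fun i => x i - c with hu
  -- centroid identity : sum of u is zero
  have hxsum : ∑ i, x i = ((n:ℝ) + 1) • c := by
    rw [hc, smul_smul]
    rw [mul_one_div, div_self (by positivity), one_smul]
  have husum : ∑ i, u i = 0 := by
    rw [hu]
    simp only [Finset.sum_sub_distrib, hxsum, Finset.sum_const, Finset.card_univ,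
      Fintype.card_fin]
    rw [sub_eq_zero]
    rw [← Nat.cast_smul_eq_nsmul ℝ]
    push_cast
    rfl
  -- face sum of u equals minus the last u
  have hface : ∑ i : Fin n, u i.castSucc = -u (Fin.last n) := by
    have := Fin.sum_univ_castSucc (f := u)
    rw [husum] at this
    exact eq_neg_of_add_eq_zero_left this.symm
  set c' : EuclideanSpace ℝ (Fin n) := c - (1 / (n:ℝ)) • u (Fin.last n) with hc'
  have hfsum : ∑ i : Fin n, x i.castSucc = (n:ℝ) • c' := by
    have : ∑ i : Fin n, x i.castSucc = ∑ i : Fin n, (u i.castSucc + c) := by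
      apply Finset.sum_congr rfl; intro i _; show x i.castSucc = (x i.castSucc - c) + c; abel
    rw [this, Finset.sum_add_distrib, hface, Finset.sum_const, Finset.card_univ,
      Fintype.card_fin, hc']
    rw [← Nat.cast_smul_eq_nsmul ℝ (n := n) (b := c), smul_sub, smul_smul,
      mul_one_div, div_self (by positivity), one_smul]
    abel
  have hxl : x (Fin.last n) - c' = (((n:ℝ) + 1) / n) • u (Fin.last n) := by
    rw [hc', hu]
    rw [show x (Fin.last n) - (c - (1 / (n:ℝ)) • (x (Fin.last n) - c))
        = (x (Fin.last n) - c) + (1 / (n:ℝ)) • (x (Fin.last n) - c) by abel]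
    rw [show ((n:ℝ) + 1) / n = 1 + 1 / n by field_simp]
    rw [add_smul, one_smul]
  have hxrc : xr - c' = -(x (Fin.last n) - c') := by
    rw [hxr]
    have h2 : (2 / (n : ℝ)) • ∑ i : Fin n, x i.castSucc = (2:ℝ) • c' := by
      rw [hfsum, smul_smul]
      congr 1
      field_simp
    rw [h2]
    rw [show (-x (Fin.last n) + (2:ℝ) • c') - c' = -(x (Fin.last n) - c') by
      have : (2:ℝ) • c' = c' + c' := by rw [two_smul]
      rw [this]; abel]
  -- norms
  have hnl : ‖x (Fin.last n) - c'‖ = ((n:ℝ) + 1) / n * δ := by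
    rw [hxl, norm_smul, hrad, Real.norm_eq_abs, abs_of_pos (by positivity)]
  have hnr : ‖xr - c'‖ = ((n:ℝ) + 1) / n * δ := by rw [hxrc, norm_neg, hnl]
  have hradu : ∀ i, ‖u i‖ = δ := fun i => hrad i
  have hinneru : ∀ i j : Fin (n+1), i ≠ j → (⟪u i, u j⟫ : ℝ) = -δ ^ 2 / n :=
    fun i j h => hinner i j h
  have hni : ∀ i : Fin n, ‖x i.castSucc - c'‖ ^ 2 = δ ^ 2 * (1 - 1 / (n:ℝ) ^ 2) := by
    intro i
    have hsplit : x i.castSucc - c' = u i.castSucc + (1 / (n:ℝ)) • u (Fin.last n) := by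
      rw [hc']
      show x i.castSucc - (c - (1 / (n:ℝ)) • u (Fin.last n))
          = (x i.castSucc - c) + (1 / (n:ℝ)) • u (Fin.last n)
      abel
    have hne : i.castSucc ≠ Fin.last n := Fin.ne_last_of_lt (Fin.castSucc_lt_last i)
    rw [hsplit, norm_add_sq_real, norm_smul, real_inner_smul_right,
      hradu, hradu, hinneru _ _ hne, Real.norm_eq_abs, abs_of_pos (by positivity)]
    field_simp
    ring
  set g' := gradient f c' with hg'
  set E : EuclideanSpace ℝ (Fin n) → ℝ := fun y => f y - f c' - ⟪g', y - c'⟫ with hE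
  have hEb : ∀ y, |E y| ≤ L / 2 * ‖y - c'‖ ^ 2 := fun y => taylor_abs f hdiff hL.le hlip c' y
  have h2 : ∑ i : Fin n, (⟪g', x i.castSucc - c'⟫ : ℝ) = 0 := by
    rw [← inner_sum]
    have hz : ∑ i : Fin n, (x i.castSucc - c') = 0 := by
      rw [Finset.sum_sub_distrib, hfsum, Finset.sum_const, card_univ, Fintype.card_fin,
        sub_eq_zero, ← Nat.cast_smul_eq_nsmul ℝ]
    rw [hz, inner_zero_right]
  have h1 : (⟪g', xr - c'⟫ : ℝ) = -⟪g', x (Fin.last n) - c'⟫ := by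
    rw [hxrc, inner_neg_right]
  have hsumE : ∑ i : Fin n, E (x i.castSucc)
      = (∑ i : Fin n, f (x i.castSucc)) - n * f c' := by
    simp only [hE]
    rw [Finset.sum_sub_distrib, Finset.sum_sub_distrib, h2, sub_zero, Finset.sum_const,
      card_univ, Fintype.card_fin, nsmul_eq_mul]
  have hiden : f xr + f (x (Fin.last n)) - (2 / n) * ∑ i : Fin n, f (x i.castSucc)
      = E xr + E (x (Fin.last n)) - (2 / n) * ∑ i : Fin n, E (x i.castSucc) := by
    rw [hsumE]
    simp only [hE]
    rw [h1]
    field_simp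
    ring
  have hbr : |E xr| ≤ L / 2 * (((n:ℝ) + 1) / n * δ) ^ 2 := by
    have := hEb xr; rwa [hnr] at this
  have hbl : |E (x (Fin.last n))| ≤ L / 2 * (((n:ℝ) + 1) / n * δ) ^ 2 := by
    have := hEb (x (Fin.last n)); rwa [hnl] at this
  have hsb : |∑ i : Fin n, E (x i.castSucc)| ≤ n * (L / 2 * (δ ^ 2 * (1 - 1 / (n:ℝ) ^ 2))) := by
    calc |∑ i : Fin n, E (x i.castSucc)| ≤ ∑ i : Fin n, |E (x i.castSucc)| :=
          Finset.abs_sum_le_sum_abs _ _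
      _ ≤ n * (L / 2 * (δ ^ 2 * (1 - 1 / (n:ℝ) ^ 2))) := by
          have : ∀ i ∈ (univ : Finset (Fin n)),
              |E (x i.castSucc)| ≤ L / 2 * (δ ^ 2 * (1 - 1 / (n:ℝ) ^ 2)) := by
            intro i _
            have := hEb (x i.castSucc)
            rwa [hni i] at this
          have h := Finset.sum_le_card_nsmul _ _ _ this
          rwa [card_univ, Fintype.card_fin, nsmul_eq_mul] at h
  rw [hiden]
  have htri : |E xr + E (x (Fin.last n)) - (2 / n) * ∑ i : Fin n, E (x i.castSucc)|
      ≤ |E xr| + |E (x (Fin.last n))| + (2 / n) * |∑ i : Fin n, E (x i.castSucc)| := by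
    calc |E xr + E (x (Fin.last n)) - (2 / n) * ∑ i : Fin n, E (x i.castSucc)|
        ≤ |E xr + E (x (Fin.last n))| + |(2 / n) * ∑ i : Fin n, E (x i.castSucc)| :=
          abs_sub _ _
      _ ≤ |E xr| + |E (x (Fin.last n))| + (2 / n) * |∑ i : Fin n, E (x i.castSucc)| := by
          rw [abs_mul, abs_of_pos (by positivity : (0:ℝ) < 2 / n)]
          exact add_le_add (abs_add_le _ _) le_rfl
  have hfinal : L / 2 * (((n:ℝ) + 1) / n * δ) ^ 2 + L / 2 * (((n:ℝ) + 1) / n * δ) ^ 2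
      + (2 / n) * (n * (L / 2 * (δ ^ 2 * (1 - 1 / (n:ℝ) ^ 2))))
      = (2 * n + 2) / n * L * δ ^ 2 := by
    field_simp
    ring
  calc |E xr + E (x (Fin.last n)) - (2 / n) * ∑ i : Fin n, E (x i.castSucc)|
      ≤ |E xr| + |E (x (Fin.last n))| + (2 / n) * |∑ i : Fin n, E (x i.castSucc)| := htri
    _ ≤ L / 2 * (((n:ℝ) + 1) / n * δ) ^ 2 + L / 2 * (((n:ℝ) + 1) / n * δ) ^ 2
        + (2 / n) * (n * (L / 2 * (δ ^ 2 * (1 - 1 / (n:ℝ) ^ 2)))) := by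
        exact add_le_add (add_le_add hbr hbl) (mul_le_mul_of_nonneg_left hsb (by positivity))
    _ = (2 * n + 2) / n * L * δ ^ 2 := hfinal

set_option maxHeartbeats 1000000 in
lemma gap_lower_bound {n : ℕ} (hn : 1 ≤ n) (L : ℝ) (hL : 0 < L)
    (f : EuclideanSpace ℝ (Fin n) → ℝ) (hdiff : Differentiable ℝ f)
    (hlip : ∀ y z : EuclideanSpace ℝ (Fin n),
      ‖gradient f y - gradient f z‖ ≤ L * ‖y - z‖)
    (x : Fin (n + 1) → EuclideanSpace ℝ (Fin n))
    (c : EuclideanSpace ℝ (Fin n)) (δ : ℝ) (hδ : 0 < δ)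
    (hc : c = (1 / (n + 1 : ℝ)) • ∑ i, x i)
    (hrad : ∀ i, ‖x i - c‖ = δ)
    (hinner : ∀ i j : Fin (n + 1), i ≠ j →
      (inner ℝ (x i - c) (x j - c) : ℝ) = -δ ^ 2 / n)
    (hsorted : ∀ i j : Fin (n + 1), i ≤ j → f (x i) ≤ f (x j)) :
    f (x (Fin.last n)) - (1 / ((n:ℝ) + 1)) * ∑ i, f (x i)
      ≥ δ / n * ‖gradient f c‖ - Real.sqrt n / (2 * n) * (L * δ ^ 2) := by
  have hn0 : (0:ℝ) < n := by exact_mod_cast hn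
  set g := gradient f c with hg
  set u : Fin (n + 1) → EuclideanSpace ℝ (Fin n) := fun i => x i - c with hu
  have hxsum : ∑ i, x i = ((n:ℝ) + 1) • c := by
    rw [hc, smul_smul, mul_one_div, div_self (by positivity), one_smul]
  have husum : ∑ i, u i = 0 := by
    rw [hu]
    simp only [Finset.sum_sub_distrib, hxsum, Finset.sum_const, Finset.card_univ,
      Fintype.card_fin]
    rw [sub_eq_zero, ← Nat.cast_smul_eq_nsmul ℝ]
    push_cast
    rfl
  have hradu : ∀ i, ‖u i‖ = δ := fun i => hrad i
  have hinneru : ∀ i j : Fin (n+1), i ≠ j → (⟪u i, u j⟫ : ℝ) = -δ ^ 2 / n :=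
    fun i j h => hinner i j h
  set e : Fin (n + 1) → ℝ := fun i => f (x i) - f c - ⟪g, u i⟫ with he
  have heb : ∀ i, |e i| ≤ L / 2 * δ ^ 2 := by
    intro i
    have h := taylor_abs f hdiff hL.le hlip c (x i)
    rw [hrad i] at h
    exact h
  have hsa : ∑ i, (⟪g, u i⟫ : ℝ) = 0 := by
    rw [← inner_sum, husum, inner_zero_right]
  set Fb : ℝ := (1 / ((n:ℝ) + 1)) * ∑ i, f (x i) with hFb
  set eb : ℝ := (1 / ((n:ℝ) + 1)) * ∑ i, e i with heb'
  have hsume : ∑ i, e i = ((n:ℝ) + 1) * eb := by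
    rw [heb']; field_simp
  have hsumf : ∑ i, f (x i) = ((n:ℝ) + 1) * Fb := by
    rw [hFb]; field_simp
  set b : Fin (n + 1) → ℝ := fun i => f (x i) - Fb with hb
  have hFbc : Fb = f c + eb := by
    have hpt : ∀ i : Fin (n+1), f (x i) = f c + ⟪g, u i⟫ + e i := fun i => by
      simp only [he]; ring
    have hsum2 : ∑ i, f (x i)
        = ((n:ℝ)+1) * f c + (∑ i, (⟪g, u i⟫ : ℝ)) + ∑ i, e i := by
      rw [Finset.sum_congr rfl (fun i _ => hpt i), Finset.sum_add_distrib,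
        Finset.sum_add_distrib, Finset.sum_const, card_univ, Fintype.card_fin, nsmul_eq_mul]
      push_cast; ring
    rw [hFb, hsum2, hsa, hsume]
    field_simp
    ring
  have hbae : ∀ i, b i = ⟪g, u i⟫ + (e i - eb) := by
    intro i
    simp only [hb, he, hFbc]
    ring
  have hsumb : ∑ i, b i = 0 := by
    simp only [hb]
    rw [Finset.sum_sub_distrib, hsumf, Finset.sum_const, card_univ, Fintype.card_fin,
      nsmul_eq_mul]
    push_cast; ring
  have hble : ∀ i, b i ≤ b (Fin.last n) := fun i =>
    sub_le_sub_right (hsorted i _ (Fin.le_last i)) _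
  have hMpos : 0 ≤ b (Fin.last n) := by
    have hsum_le : ∑ i, b i ≤ ((n:ℝ) + 1) * b (Fin.last n) := by
      have h := Finset.sum_le_card_nsmul univ b (b (Fin.last n)) (fun i _ => hble i)
      rwa [card_univ, Fintype.card_fin, nsmul_eq_mul, Nat.cast_add, Nat.cast_one] at h
    rw [hsumb] at hsum_le
    nlinarith
  have hsq := sum_sq_le_of_sum_eq_zero b hsumb hble
  -- Euclidean vectors of the coefficient sequences
  set A : EuclideanSpace ℝ (Fin (n+1)) := WithLp.toLp 2 (fun i => (⟪g, u i⟫ : ℝ)) with hA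
  set Ee : EuclideanSpace ℝ (Fin (n+1)) := WithLp.toLp 2 (fun i => e i - eb) with hEe
  set B : EuclideanSpace ℝ (Fin (n+1)) := WithLp.toLp 2 (fun i => b i) with hB
  have hBA : A = B - Ee := by
    ext i
    show (⟪g, u i⟫ : ℝ) = b i - (e i - eb)
    rw [hbae i]; ring
  have hnB2 : ‖B‖ ^ 2 = ∑ i, b i ^ 2 := by
    rw [EuclideanSpace.norm_eq, Real.sq_sqrt (by positivity)]
    exact Finset.sum_congr rfl fun i _ => by rw [Real.norm_eq_abs, sq_abs]
  have hnA2 : ‖A‖ ^ 2 = ∑ i, (⟪g, u i⟫ : ℝ) ^ 2 := by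
    rw [EuclideanSpace.norm_eq, Real.sq_sqrt (by positivity)]
    exact Finset.sum_congr rfl fun i _ => by rw [Real.norm_eq_abs, sq_abs]
  have hnE2 : ‖Ee‖ ^ 2 = ∑ i, (e i - eb) ^ 2 := by
    rw [EuclideanSpace.norm_eq, Real.sq_sqrt (by positivity)]
    exact Finset.sum_congr rfl fun i _ => by rw [Real.norm_eq_abs, sq_abs]
  have hisot := simplex_isotropy hn u hδ husum hradu hinneru g
  set s := Real.sqrt ((n:ℝ) * (n + 1)) with hs
  have hs0 : 0 < s := Real.sqrt_pos.2 (by positivity)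
  have hs2 : s ^ 2 = (n:ℝ) * (n + 1) := Real.sq_sqrt (by positivity)
  set r := Real.sqrt (n:ℝ) with hr
  have hr0 : 0 < r := Real.sqrt_pos.2 hn0
  have hr2 : r ^ 2 = (n:ℝ) := Real.sq_sqrt hn0.le
  have hBle : ‖B‖ ≤ s * b (Fin.last n) := by
    have h1 : ‖B‖ ^ 2 ≤ (s * b (Fin.last n)) ^ 2 := by
      rw [hnB2, mul_pow, hs2]
      exact hsq
    calc ‖B‖ = Real.sqrt (‖B‖ ^ 2) := (Real.sqrt_sq (norm_nonneg _)).symm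
      _ ≤ Real.sqrt ((s * b (Fin.last n)) ^ 2) := Real.sqrt_le_sqrt h1
      _ = s * b (Fin.last n) := Real.sqrt_sq (mul_nonneg hs0.le hMpos)
  have hAeq : ‖A‖ = s / n * (δ * ‖g‖) := by
    have h1 : ‖A‖ ^ 2 = (s / n * (δ * ‖g‖)) ^ 2 := by
      rw [hnA2, hisot, mul_pow, div_pow, hs2, mul_pow]
      field_simp
    calc ‖A‖ = Real.sqrt (‖A‖ ^ 2) := (Real.sqrt_sq (norm_nonneg _)).symm
      _ = Real.sqrt ((s / n * (δ * ‖g‖)) ^ 2) := by rw [h1]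
      _ = s / n * (δ * ‖g‖) := Real.sqrt_sq (by positivity)
  have hEle : ‖Ee‖ ≤ s / r * (L / 2 * δ ^ 2) := by
    have hsum3 : ∑ i, (e i - eb) ^ 2 = (∑ i, e i ^ 2) - ((n:ℝ) + 1) * eb ^ 2 := by
      have hpt : ∀ i : Fin (n+1), (e i - eb) ^ 2 = e i ^ 2 - 2 * eb * e i + eb ^ 2 :=
        fun i => by ring
      rw [Finset.sum_congr rfl (fun i _ => hpt i), Finset.sum_add_distrib,
        Finset.sum_sub_distrib, Finset.sum_const, card_univ, Fintype.card_fin, nsmul_eq_mul,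
        ← Finset.mul_sum, hsume]
      push_cast; ring
    have hsum4 : ∑ i, e i ^ 2 ≤ ((n:ℝ) + 1) * (L / 2 * δ ^ 2) ^ 2 := by
      have hpt : ∀ i ∈ (univ : Finset (Fin (n+1))), e i ^ 2 ≤ (L / 2 * δ ^ 2) ^ 2 := by
        intro i _
        rw [← sq_abs]
        exact pow_le_pow_left₀ (abs_nonneg _) (heb i) 2
      have h := Finset.sum_le_card_nsmul univ _ _ hpt
      rwa [card_univ, Fintype.card_fin, nsmul_eq_mul, Nat.cast_add, Nat.cast_one] at h
    have h1 : ‖Ee‖ ^ 2 ≤ (s / r * (L / 2 * δ ^ 2)) ^ 2 := by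
      rw [hnE2, mul_pow, div_pow, hs2, hr2]
      have heq : (n:ℝ) * (n + 1) / n = (n:ℝ) + 1 := by field_simp
      rw [heq]
      calc ∑ i, (e i - eb) ^ 2 ≤ ∑ i, e i ^ 2 := by
            rw [hsum3]; nlinarith [sq_nonneg eb]
        _ ≤ ((n:ℝ) + 1) * (L / 2 * δ ^ 2) ^ 2 := hsum4
    calc ‖Ee‖ = Real.sqrt (‖Ee‖ ^ 2) := (Real.sqrt_sq (norm_nonneg _)).symm
      _ ≤ Real.sqrt ((s / r * (L / 2 * δ ^ 2)) ^ 2) := Real.sqrt_le_sqrt h1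
      _ = s / r * (L / 2 * δ ^ 2) := Real.sqrt_sq (by positivity)
  have htri : ‖A‖ ≤ ‖B‖ + ‖Ee‖ := by
    rw [hBA]
    exact norm_sub_le _ _
  have hchain : s / n * (δ * ‖g‖) ≤ s * b (Fin.last n) + s / r * (L / 2 * δ ^ 2) := by
    rw [← hAeq]
    exact htri.trans (add_le_add hBle hEle)
  have hdiv : δ * ‖g‖ / n ≤ b (Fin.last n) + 1 / r * (L / 2 * δ ^ 2) := by
    have h1 : s * (δ * ‖g‖ / n) ≤ s * (b (Fin.last n) + 1 / r * (L / 2 * δ ^ 2)) := by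
      calc s * (δ * ‖g‖ / n) = s / n * (δ * ‖g‖) := by ring
        _ ≤ s * b (Fin.last n) + s / r * (L / 2 * δ ^ 2) := hchain
        _ = s * (b (Fin.last n) + 1 / r * (L / 2 * δ ^ 2)) := by ring
    exact le_of_mul_le_mul_left h1 hs0
  have hval : 1 / r * (L / 2 * δ ^ 2) = r / (2 * n) * (L * δ ^ 2) := by
    rw [← hr2]; field_simp
  have hbl : b (Fin.last n) = f (x (Fin.last n)) - Fb := rfl
  rw [ge_iff_le, ← hbl]
  have h := hdiv
  rw [hval] at h
  calc δ / ↑n * ‖g‖ - r / (2 * ↑n) * (L * δ ^ 2)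
      = δ * ‖g‖ / ↑n - r / (2 * ↑n) * (L * δ ^ 2) := by ring
    _ ≤ b (Fin.last n) := by linarith

/-- Sufficient condition for reflection in RSSM (nonconvex case): if the
reflection is rejected then `((β+1)n + √n/2)·L·δ ≥ ‖∇f(c)‖`; consequently, if
`δ ≤ ‖∇f(c)‖/(L((β+1)n + √n/2))` then the reflection is accepted. -/
theorem sufficient_condition_reflection (n : ℕ) (hn : 1 ≤ n) (L β : ℝ)
    (hL : 0 < L) (hβ : 0 < β)
    (f : EuclideanSpace ℝ (Fin n) → ℝ)
    (hdiff : Differentiable ℝ f)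
    (hlip : ∀ y z : EuclideanSpace ℝ (Fin n),
      ‖gradient f y - gradient f z‖ ≤ L * ‖y - z‖)
    (fstar : ℝ) (hmin : ∀ y, fstar ≤ f y)
    (x : Fin (n + 1) → EuclideanSpace ℝ (Fin n))
    (c : EuclideanSpace ℝ (Fin n)) (δ : ℝ) (hδ : 0 < δ)
    (hc : c = (1 / (n + 1 : ℝ)) • ∑ i, x i)
    (hrad : ∀ i, ‖x i - c‖ = δ)
    (hinner : ∀ i j : Fin (n + 1), i ≠ j →
      (inner ℝ (x i - c) (x j - c) : ℝ) = -δ ^ 2 / n)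
    (hsorted : ∀ i j : Fin (n + 1), i ≤ j → f (x i) ≤ f (x j))
    (xr : EuclideanSpace ℝ (Fin n))
    (hxr : xr = -x (Fin.last n) + (2 / (n : ℝ)) • ∑ i : Fin n, x i.castSucc) :
    (f xr - f (x (Fin.last n)) > -((2 * n + 2 : ℝ) / n) * β * L * δ ^ 2 →
      ((β + 1) * n + Real.sqrt n / 2) * L * δ ≥ ‖gradient f c‖) ∧
    (δ ≤ ‖gradient f c‖ / (L * ((β + 1) * n + Real.sqrt n / 2)) →
      f xr - f (x (Fin.last n)) ≤ -((2 * n + 2 : ℝ) / n) * β * L * δ ^ 2) := by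
  have hn0 : (0:ℝ) < n := by exact_mod_cast hn
  have hnne : (n:ℝ) ≠ 0 := ne_of_gt hn0
  have hA := reflection_expansion hn L hL f hdiff hlip x c δ hδ hc hrad hinner xr hxr
  have hB := gap_lower_bound hn L hL f hdiff hlip x c δ hδ hc hrad hinner hsorted
  set g := gradient f c with hg
  set Fl := f (x (Fin.last n)) with hFl
  set Sf := ∑ i : Fin n, f (x i.castSucc) with hSf
  set St := ∑ i, f (x i) with hSt
  have hsplit : St = Sf + Fl := by
    rw [hSt, hSf, hFl, Fin.sum_univ_castSucc]
  have hKpos : 0 < (β + 1) * n + Real.sqrt n / 2 := by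
    have h1 : 0 < (β + 1) * n := mul_pos (by linarith) hn0
    have h2 : 0 ≤ Real.sqrt n / 2 := by positivity
    linarith
  have hstrict : f xr - Fl > -((2 * n + 2 : ℝ) / n) * β * L * δ ^ 2 →
      ‖g‖ < ((β + 1) * n + Real.sqrt n / 2) * L * δ := by
    intro hrej
    have h1 : f xr + Fl - (2 / n) * Sf ≤ (2 * n + 2) / n * L * δ ^ 2 := (abs_le.1 hA).2
    have hiden : (2:ℝ) / n * Sf - 2 * Fl
        = -((2 * n + 2) / n) * (Fl - (1 / ((n:ℝ) + 1)) * St) := by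
      rw [hsplit]
      field_simp
      ring
    have h3 : Fl - (1 / ((n:ℝ) + 1)) * St < (1 + β) * L * δ ^ 2 := by
      have h2 : (2 * n + 2) / n * (Fl - (1 / ((n:ℝ) + 1)) * St)
          < (2 * n + 2) / n * ((1 + β) * L * δ ^ 2) := by
        nlinarith [hrej, h1, hiden]
      have hpos : (0:ℝ) < (2 * n + 2) / n := by positivity
      exact lt_of_mul_lt_mul_left (by linarith [h2]) hpos.le
    have h4 : δ / n * ‖g‖ - Real.sqrt n / (2 * n) * (L * δ ^ 2) < (1 + β) * L * δ ^ 2 :=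
      lt_of_le_of_lt hB h3
    -- multiply by n and divide by δ
    have h5 : δ * ‖g‖ < δ * (((β + 1) * n + Real.sqrt n / 2) * L * δ) := by
      have h4n := mul_lt_mul_of_pos_left h4 hn0
      have e1 : (n:ℝ) * (δ / n * ‖g‖ - Real.sqrt n / (2 * n) * (L * δ ^ 2))
          = δ * ‖g‖ - Real.sqrt n / 2 * (L * δ ^ 2) := by
        field_simp
      rw [e1] at h4n
      nlinarith [h4n]
    exact lt_of_mul_lt_mul_left h5 hδ.le
  constructor
  · intro hrej
    exact le_of_lt (hstrict hrej)
  · intro hdle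
    by_contra hcon
    push_neg at hcon
    have h5 := hstrict hcon
    have h6 : δ * (L * ((β + 1) * n + Real.sqrt n / 2)) ≤ ‖g‖ :=
      (le_div_iff₀ (mul_pos hL hKpos)).1 hdle
    linarith [h5, h6]
end

section
/- Suppose f : R^n → R is L-smooth and a shrinking step replaces x_i by γ·x_i + (1−γ)·x_1 for i = 2,...,n+1, where the simplex is regular with radius δ and γ ∈ (0,1). Then the sum of function values increases by at most L·γ(1−γ)·(n+1)·δ²: Σ f(x_i^{new}) ≤ Σ f(x_i) + (n+1)·L·γ(1−γ)·δ², provided f(x_1) ≤ f(x_i) for all i. -/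
/-- Descent-type interpolation bound for functions with Lipschitz gradient. -/
lemma smooth_interp_bound {n : ℕ} (L : ℝ) (f : EuclideanSpace ℝ (Fin n) → ℝ)
    (hdiff : Differentiable ℝ f)
    (hlip : ∀ y z : EuclideanSpace ℝ (Fin n),
      ‖gradient f y - gradient f z‖ ≤ L * ‖y - z‖)
    (a b : EuclideanSpace ℝ (Fin n)) (γ : ℝ) (hγ0 : 0 ≤ γ) (hγ1 : γ ≤ 1) :
    f (γ • b + (1 - γ) • a) ≤ γ * f b + (1 - γ) * f a
      + L / 2 * (γ * (1 - γ)) * ‖b - a‖ ^ 2 := by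
  set v : EuclideanSpace ℝ (Fin n) := b - a with hv
  set C : ℝ := L * ‖v‖ ^ 2 with hC
  set ψ : ℝ → ℝ := fun t => f (a + t • v) + C / 2 * t ^ 2 with hψ
  have key : ∀ t : ℝ, HasDerivAt ψ
      ((inner ℝ (gradient f (a + t • v)) v : ℝ) + C * t) t := by
    intro t
    have h1 : HasDerivAt (fun t : ℝ => a + t • v) v t := by
      simpa using ((hasDerivAt_id t).smul_const v).const_add a
    have h2 : HasFDerivAt f
        (InnerProductSpace.toDual ℝ _ (gradient f (a + t • v))) (a + t • v) :=
      (hdiff _).hasGradientAt.hasFDerivAt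
    have h3 := h2.comp_hasDerivAt t h1
    have h4 : HasDerivAt (fun t : ℝ => C / 2 * t ^ 2) (C * t) t := by
      have := (hasDerivAt_pow 2 t).const_mul (C / 2)
      refine this.congr_deriv ?_
      ring
    have h5 := h3.add h4
    have h6 : HasDerivAt ψ _ t := h5
    simpa [InnerProductSpace.toDual_apply_apply] using h6
  have hdψ : Differentiable ℝ ψ := fun t => (key t).differentiableAt
  have hderiv : deriv ψ = fun t =>
      (inner ℝ (gradient f (a + t • v)) v : ℝ) + C * t :=
    funext fun t => (key t).deriv
  have hmono : Monotone (deriv ψ) := by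
    rw [hderiv]
    intro s t hst
    have hsub : (a + s • v) - (a + t • v) = (s - t) • v := by
      rw [sub_smul]; abel
    have h6 : (inner ℝ (gradient f (a + s • v)
        - gradient f (a + t • v)) v : ℝ)
        ≤ ‖gradient f (a + s • v) - gradient f (a + t • v)‖ * ‖v‖ :=
      real_inner_le_norm _ _
    have h7 : ‖gradient f (a + s • v) - gradient f (a + t • v)‖
        ≤ L * ((t - s) * ‖v‖) := by
      calc _ ≤ L * ‖(a + s • v) - (a + t • v)‖ := hlip _ _
        _ = L * ((t - s) * ‖v‖) := by
            rw [hsub, norm_smul, Real.norm_eq_abs, abs_of_nonpos (by linarith)]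
            ring
    have h8 : (inner ℝ (gradient f (a + s • v)) v : ℝ)
        - (inner ℝ (gradient f (a + t • v)) v : ℝ) ≤ C * (t - s) := by
      have h7' := mul_le_mul_of_nonneg_right h7 (norm_nonneg v)
      have heq : L * ((t - s) * ‖v‖) * ‖v‖ = C * (t - s) := by rw [hC]; ring
      rw [heq] at h7'
      have := h6.trans h7'
      rwa [inner_sub_left] at this
    simp only
    linarith
  have hconv : ConvexOn ℝ Set.univ ψ := hmono.convexOn_univ_of_deriv hdψ
  have h9 := hconv.2 (Set.mem_univ (1 : ℝ)) (Set.mem_univ (0 : ℝ)) hγ0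
    (by linarith : (0:ℝ) ≤ 1 - γ) (by ring)
  have e1 : γ • (1:ℝ) + (1 - γ) • (0:ℝ) = γ := by simp
  rw [e1] at h9
  have e2 : ψ γ = f (γ • b + (1 - γ) • a) + C / 2 * γ ^ 2 := by
    have : a + γ • v = γ • b + (1 - γ) • a := by
      rw [hv]; module
    simp only [hψ, this]
  have e3 : ψ 1 = f b + C / 2 := by
    have hab : a + (1:ℝ) • v = b := by rw [hv]; module
    show f (a + (1:ℝ) • v) + C / 2 * (1:ℝ) ^ 2 = f b + C / 2
    rw [hab]; ring
  have e4 : ψ 0 = f a := by simp [hψ]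
  rw [e2, e3, e4, smul_eq_mul, smul_eq_mul] at h9
  have hnv : ‖v‖ ^ 2 = ‖b - a‖ ^ 2 := by rw [hv]
  nlinarith [h9]

/-- Maximum increase in summed function values due to one shrinking step: for an
`L`-smooth `f` and a regular simplex of radius `δ`,
`∑ f(x_i^{new}) ≤ ∑ f(x_i) + (n+1)·L·γ(1−γ)·δ²`. -/
theorem shrink_increase_bound (n : ℕ) (hn : 1 ≤ n) (L : ℝ) (hL : 0 < L)
    (f : EuclideanSpace ℝ (Fin n) → ℝ)
    (hdiff : Differentiable ℝ f)
    (hlip : ∀ y z : EuclideanSpace ℝ (Fin n),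
      ‖gradient f y - gradient f z‖ ≤ L * ‖y - z‖)
    (x : Fin (n + 1) → EuclideanSpace ℝ (Fin n))
    (c : EuclideanSpace ℝ (Fin n)) (δ : ℝ) (hδ : 0 < δ)
    (hc : c = (1 / (n + 1 : ℝ)) • ∑ i, x i)
    (hrad : ∀ i, ‖x i - c‖ = δ)
    (hinner : ∀ i j : Fin (n + 1), i ≠ j →
      (inner ℝ (x i - c) (x j - c) : ℝ) = -δ ^ 2 / n)
    (hbest : ∀ i, f (x 0) ≤ f (x i))
    (γ : ℝ) (hγ : γ ∈ Set.Ioo (0 : ℝ) 1)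
    (y : Fin (n + 1) → EuclideanSpace ℝ (Fin n))
    (hy : ∀ i : Fin (n + 1), y i = if i = 0 then x 0 else γ • x i + (1 - γ) • x 0) :
    ∑ i, f (y i) ≤ ∑ i, f (x i) + (n + 1 : ℝ) * L * (γ * (1 - γ)) * δ ^ 2 := by
  obtain ⟨hγ0, hγ1⟩ := hγ
  have hn0 : (n : ℝ) ≠ 0 := by positivity
  set K : ℝ := (n + 1 : ℝ) / n * L * (γ * (1 - γ)) * δ ^ 2 with hK
  have hpoint : ∀ i : Fin (n + 1),
      f (y i) ≤ f (x i) + (if i = 0 then 0 else K) := by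
    intro i
    by_cases h : i = 0
    · simp [hy, h]
    · have hns : ‖x i - x 0‖ ^ 2 = 2 * δ ^ 2 + 2 * δ ^ 2 / n := by
        have e : x i - x 0 = (x i - c) - (x 0 - c) := by abel
        rw [e, norm_sub_sq_real, hrad, hrad, hinner i 0 h]
        ring
      have hib := smooth_interp_bound L f hdiff hlip (x 0) (x i) γ
        hγ0.le hγ1.le
      rw [hns] at hib
      have hyi : y i = γ • x i + (1 - γ) • x 0 := by rw [hy]; simp [h]
      rw [hyi] at *
      have hb := hbest i
      have hgg : 0 ≤ γ * (1 - γ) := by nlinarith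
      have : L / 2 * (γ * (1 - γ)) * (2 * δ ^ 2 + 2 * δ ^ 2 / n) = K := by
        rw [hK]; field_simp
      simp [h]
      nlinarith [hib, hb]
  have hsum : ∑ i, f (y i) ≤ ∑ i : Fin (n + 1), (f (x i) + (if i = 0 then 0 else K)) :=
    Finset.sum_le_sum (fun i _ => hpoint i)
  have hsplit : ∑ i : Fin (n + 1), (f (x i) + (if i = 0 then 0 else K))
      = ∑ i, f (x i) + (n : ℝ) * K := by
    rw [Finset.sum_add_distrib]
    congr 1
    rw [Fin.sum_univ_succ]
    simp [Fin.succ_ne_zero]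
  have hnK : (n : ℝ) * K = (n + 1 : ℝ) * L * (γ * (1 - γ)) * δ ^ 2 := by
    rw [hK]; field_simp
  calc ∑ i, f (y i) ≤ ∑ i : Fin (n + 1), (f (x i) + (if i = 0 then 0 else K)) := hsum
    _ = ∑ i, f (x i) + (n : ℝ) * K := hsplit
    _ = _ := by rw [hnK]
end
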